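/- Let F be a continuous CDF. Then for every real c, the integral over (c, ∞) of the function u ↦ (1 − F(u))² with respect to the Lebesgue–Stieltjes measure μ_F equals (1 − F(c))³/3. In particular, ∫_ℝ (1 − F(u))² dμ_F(u) = 1/3. -/

import Mathlib

open MeasureTheory Filter Set

variable {F : StieltjesFunction ℝ}

lemma sInfLevel (hFc : Continuous F) (h1 : Tendsto F atTop (nhds 1))
    {y : ℝ} (hy : y < 1) (hne : {u | F u ≤ y}.Nonempty) :
    ∃ t, F t = y ∧ {u | F u ≤ y} = Set.Iic t := by
  have hev : ∀ᶠ u in atTop, y < F u := h1.eventually_const_lt hy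
  obtain ⟨M, hM⟩ := eventually_atTop.mp hev
  have hbdd : BddAbove {u | F u ≤ y} :=
    ⟨M, fun u hu => le_of_not_gt fun hlt => absurd (hM u hlt.le) (not_lt.2 hu)⟩
  have hclosed : IsClosed {u | F u ≤ y} := isClosed_le hFc continuous_const
  set t := sSup {u | F u ≤ y} with ht
  have htmem : F t ≤ y := hclosed.csSup_mem hne hbdd
  have hFt : F t = y := by
    rcases eq_or_lt_of_le htmem with h | hlt
    · exact h
    · exfalso
      have h2 : ∀ᶠ u in nhds t, F u < y := (hFc.tendsto t).eventually_lt_const hlt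
      have h3 : ∀ᶠ u in nhdsWithin t (Set.Ioi t), F u < y ∧ u ∈ Set.Ioi t :=
        (h2.filter_mono nhdsWithin_le_nhds).and self_mem_nhdsWithin
      obtain ⟨u, hu1, hu2⟩ := h3.exists
      exact absurd (le_csSup hbdd hu1.le) (not_le.2 hu2)
  refine ⟨t, hFt, Set.ext fun u => ⟨fun hu => le_csSup hbdd hu, fun hu => ?_⟩⟩
  exact le_trans (F.mono hu) htmem

lemma map_restrict (hFc : Continuous F) (h0 : Tendsto F atBot (nhds 0))
    (h1 : Tendsto F atTop (nhds 1)) (c : ℝ) :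
    Measure.map F (F.measure.restrict (Set.Ioi c)) =
      volume.restrict (Set.Ioc (F c) 1) := by
  have hF0 : ∀ x, (0:ℝ) ≤ F x := fun x => F.mono.le_of_tendsto h0 x
  have hF1 : ∀ x, F x ≤ 1 := fun x => F.mono.ge_of_tendsto h1 x
  haveI : IsProbabilityMeasure F.measure := F.isProbabilityMeasure h0 h1
  refine Measure.ext_of_Iic _ _ (fun y => ?_)
  rw [Measure.map_apply hFc.measurable measurableSet_Iic,
    Measure.restrict_apply (hFc.measurable measurableSet_Iic),
    Measure.restrict_apply measurableSet_Iic]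
  rcases lt_or_ge y (F c) with hy | hy
  · have h₁ : F ⁻¹' Set.Iic y ∩ Set.Ioi c = ∅ := by
      ext u
      simp only [Set.mem_inter_iff, Set.mem_preimage, Set.mem_Iic, Set.mem_Ioi,
        Set.mem_empty_iff_false, iff_false, not_and]
      intro hu hc
      exact absurd (F.mono hc.le) (not_le.2 (lt_of_le_of_lt hu hy))
    have h₂ : Set.Iic y ∩ Set.Ioc (F c) 1 = ∅ := by
      ext x
      simp only [Set.mem_inter_iff, Set.mem_Iic, Set.mem_Ioc, Set.mem_empty_iff_false,
        iff_false, not_and]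
      intro hx hc
      exact absurd hc (not_lt.2 (hx.trans hy.le))
    rw [h₁, h₂, measure_empty, measure_empty]
  rcases lt_or_ge y 1 with hy1 | hy1
  · obtain ⟨t, hFt, hset⟩ := sInfLevel hFc h1 hy1 ⟨c, hy⟩
    have hct : c ≤ t := by
      have : c ∈ Set.Iic t := hset ▸ (hy : F c ≤ y)
      exact this
    have h₁ : F ⁻¹' Set.Iic y ∩ Set.Ioi c = Set.Ioc c t := by
      rw [show F ⁻¹' Set.Iic y = {u | F u ≤ y} from rfl, hset]
      rw [Set.inter_comm, Set.Ioi_inter_Iic]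
    have h₂ : Set.Iic y ∩ Set.Ioc (F c) 1 = Set.Ioc (F c) y := by
      rw [Set.inter_comm, Set.Ioc_inter_Iic, min_eq_right hy1.le]
    rw [h₁, h₂, F.measure_Ioc, Real.volume_Ioc, hFt]
  · have h₁ : F ⁻¹' Set.Iic y ∩ Set.Ioi c = Set.Ioi c := by
      rw [Set.inter_eq_right]
      intro u _
      exact (hF1 u).trans hy1
    have h₂ : Set.Iic y ∩ Set.Ioc (F c) 1 = Set.Ioc (F c) 1 := by
      rw [Set.inter_eq_right]
      intro x hx
      exact hx.2.trans hy1
    rw [h₁, h₂, Real.volume_Ioc, show Set.Ioi c = (Set.Iic c)ᶜ from (Set.compl_Iic).symm,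
      measure_compl measurableSet_Iic (measure_ne_top _ _), F.measure_Iic h0,
      measure_univ, sub_zero, ← ENNReal.ofReal_one, ← ENNReal.ofReal_sub _ (hF0 c)]

lemma map_full (hFc : Continuous F) (h0 : Tendsto F atBot (nhds 0))
    (h1 : Tendsto F atTop (nhds 1)) :
    Measure.map F F.measure = volume.restrict (Set.Ioc 0 1) := by
  have hF0 : ∀ x, (0:ℝ) ≤ F x := fun x => F.mono.le_of_tendsto h0 x
  have hF1 : ∀ x, F x ≤ 1 := fun x => F.mono.ge_of_tendsto h1 x
  haveI : IsProbabilityMeasure F.measure := F.isProbabilityMeasure h0 h1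
  refine Measure.ext_of_Iic _ _ (fun y => ?_)
  rw [Measure.map_apply hFc.measurable measurableSet_Iic,
    Measure.restrict_apply measurableSet_Iic]
  rcases lt_or_ge y 0 with hy | hy
  · have h₁ : F ⁻¹' Set.Iic y = ∅ := by
      ext u
      simp only [Set.mem_preimage, Set.mem_Iic, Set.mem_empty_iff_false, iff_false, not_le]
      exact lt_of_lt_of_le hy (hF0 u)
    have h₂ : Set.Iic y ∩ Set.Ioc 0 1 = ∅ := by
      ext x
      simp only [Set.mem_inter_iff, Set.mem_Iic, Set.mem_Ioc, Set.mem_empty_iff_false,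
        iff_false, not_and]
      intro hx hc
      exact absurd hc (not_lt.2 (hx.trans hy.le))
    rw [h₁, h₂, measure_empty, measure_empty]
  rcases lt_or_ge y 1 with hy1 | hy1
  · have h₂ : Set.Iic y ∩ Set.Ioc 0 1 = Set.Ioc 0 y := by
      rw [Set.inter_comm, Set.Ioc_inter_Iic, min_eq_right hy1.le]
    rcases Set.eq_empty_or_nonempty {u | F u ≤ y} with hne | hne
    · have hy0 : y = 0 := by
        rcases eq_or_lt_of_le hy with h | h
        · exact h.symm
        · exfalso
          obtain ⟨u, hu⟩ := (h0.eventually_lt_const h).exists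
          exact Set.eq_empty_iff_forall_notMem.mp hne u hu.le
      rw [show F ⁻¹' Set.Iic y = {u | F u ≤ y} from rfl, hne, h₂, measure_empty,
        Real.volume_Ioc, hy0, sub_zero, ENNReal.ofReal_zero]
    · obtain ⟨t, hFt, hset⟩ := sInfLevel hFc h1 hy1 hne
      rw [show F ⁻¹' Set.Iic y = {u | F u ≤ y} from rfl, hset, F.measure_Iic h0, h₂,
        Real.volume_Ioc, hFt, sub_zero]
  · have h₁ : F ⁻¹' Set.Iic y = Set.univ := by
      ext u
      simp only [Set.mem_preimage, Set.mem_Iic, Set.mem_univ, iff_true]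
      exact (hF1 u).trans hy1
    have h₂ : Set.Iic y ∩ Set.Ioc 0 1 = Set.Ioc 0 1 := by
      rw [Set.inter_eq_right]
      intro x hx
      exact hx.2.trans hy1
    rw [h₁, h₂, measure_univ, Real.volume_Ioc]
    norm_num

lemma ioc_int (a : ℝ) (ha : a ≤ 1) :
    ∫ y in Set.Ioc a 1, (1 - y) ^ 2 = (1 - a) ^ 3 / 3 := by
  rw [← intervalIntegral.integral_of_le ha]
  have : ∫ y in a..1, (1 - y) ^ 2 = ∫ x in (1-1:ℝ)..(1-a), x ^ 2 :=
    intervalIntegral.integral_comp_sub_left (fun x => x ^ 2) 1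
  rw [this]
  norm_num [integral_pow]

theorem survival_sq_integral (F : StieltjesFunction ℝ) (hFc : Continuous F)
    (h0 : Filter.Tendsto F Filter.atBot (nhds 0))
    (h1 : Filter.Tendsto F Filter.atTop (nhds 1)) :
    (∀ c : ℝ, ∫ u in Set.Ioi c, (1 - F u) ^ 2 ∂F.measure = (1 - F c) ^ 3 / 3) ∧
    (∫ u, (1 - F u) ^ 2 ∂F.measure = 1 / 3) := by
  have hFm : AEMeasurable F (μ := F.measure) := hFc.measurable.aemeasurable
  have hgc : Continuous (fun y : ℝ => (1 - y) ^ 2) := by fun_prop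
  have hF1 : ∀ x, F x ≤ 1 := fun x => F.mono.ge_of_tendsto h1 x
  constructor
  · intro c
    have := MeasureTheory.integral_map (μ := F.measure.restrict (Set.Ioi c))
      hFc.measurable.aemeasurable
      (f := fun y : ℝ => (1 - y) ^ 2) (hgc.aestronglyMeasurable)
    rw [map_restrict hFc h0 h1 c] at this
    rw [← this, ioc_int (F c) (hF1 c)]
  · have := MeasureTheory.integral_map (μ := F.measure) hFm
      (f := fun y : ℝ => (1 - y) ^ 2) (hgc.aestronglyMeasurable)
    rw [map_full hFc h0 h1] at this
    rw [← this, ioc_int 0 (by norm_num)]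
    norm_num
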